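/- Let m : Index ⇀ V be a finite partial map with [] ∈ dom(m), x a variable storing m, and T : Index ⇀ V a finite partial map. Define the updated map m' by m'(i) = T(i) if i ∈ dom(T), undefined if i ∈ dom(T)↑ \ dom(T), and m(i) otherwise. Then for every index i: extend(m')(i) = extend(T)(i) if i ∈ dom(T)↑, and extend(m')(i) = extend(m)(i) otherwise. Equivalently, extend(m') = extend(m)[extend(T)], the update of extend(m) by the partial function extend(T). -/

import Mathlib

/-- An index: a finite sequence of string-integer pairs with no repeated string. -/
def Index : Type := {l : List (String × ℤ) // (l.map Prod.fst).Nodup}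

/-- The prefix order on indices. -/
def Index.pre (i j : Index) : Prop := i.1 <+: j.1

/-- The empty index. -/
def emptyIdx : Index := ⟨[], by simp⟩

/-- Downward closure of a single index. -/
def down (k : Index) : Set Index := {i | Index.pre i k}

/-- Downward closure of a set of indices. -/
def downSet (L : Set Index) : Set Index := {j | ∃ l ∈ L, Index.pre j l}

/-- Upward closure of a set of indices. -/
def upSet (L : Set Index) : Set Index := {j | ∃ l ∈ L, Index.pre l j}

/-- `m` is the ⊑-greatest element of `S`. -/
def greatestIn (S : Set Index) (m : Index) : Prop := m ∈ S ∧ ∀ s ∈ S, Index.pre s m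

/-- Domain of a partial map represented as an `Option`-valued function. -/
def pdom {V : Type*} (f : Index → Option V) : Set Index := {i | f i ≠ none}

open Classical in
/-- `extend(f)(i) = f(max(dom f ∩ i↓))` when the maximum exists; undefined otherwise. -/
noncomputable def extendFun {V : Type*} (f : Index → Option V) (i : Index) : Option V :=
  if h : ∃ m, greatestIn (pdom f ∩ down i) m then f h.choose else none

open Classical in
/-- The update of `f` by `T`: `T i` on `dom T`, undefined on `(dom T)↑ \ dom T`,
`f i` otherwise. -/
noncomputable def updateMap {V : Type*} (f T : Index → Option V) : Index → Option V :=
  fun i => if i ∈ pdom T then T i else if i ∈ upSet (pdom T) then none else f i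

/-- Pointwise sum of two real tensors. -/
def oplus (T T' : Index → Option ℝ) : Index → Option ℝ := fun i =>
  match T i, T' i with
  | some a, some b => some (a + b)
  | some a, none => some a
  | none, some b => some b
  | none, none => none

/-- A coupling: a partial bijection on indices that agrees on shared strings. -/
def Coupling (R : Index → Index → Prop) : Prop :=
  (∀ i₀ i₁ j, R i₀ j → R i₁ j → i₀ = i₁) ∧
  (∀ i j₀ j₁, R i j₀ → R i j₁ → j₀ = j₁) ∧
  (∀ i₀ i₁, R i₀ i₁ → ∀ (α : String) (v₀ v₁ : ℤ),
    (α, v₀) ∈ i₀.1 → (α, v₁) ∈ i₁.1 → v₀ = v₁)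

/-- The relation `P(R)` on sets of indices induced by a coupling `R`. -/
def PRel (R : Index → Index → Prop) (L₀ L₁ : Set Index) : Prop :=
  ∀ i₀ i₁, R i₀ i₁ →
    ((i₀ ∈ upSet L₀ ↔ i₁ ∈ upSet L₁) ∧
     (i₀ ∈ upSet L₀ → ∃ m₀ m₁, greatestIn (L₀ ∩ down i₀) m₀ ∧
        greatestIn (L₁ ∩ down i₁) m₁ ∧ R m₀ m₁))

/-- The relation `[R ⇀ Δ_V]` / `Tensor_V(R)` on partial maps. -/
def TensorRel {V : Type*} (R : Index → Index → Prop) (T₀ T₁ : Index → Option V) : Prop :=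
  ∀ i₀ i₁, R i₀ i₁ →
    ((i₀ ∈ pdom T₀ ↔ i₁ ∈ pdom T₁) ∧ (i₀ ∈ pdom T₀ → T₀ i₀ = T₁ i₁))

/-- The relation `Tensor†_V(R)` on partial maps (via `extend`). -/
def TensorDagRel {V : Type*} (R : Index → Index → Prop) (T₀ T₁ : Index → Option V) : Prop :=
  ∀ i₀ i₁, R i₀ i₁ →
    ((i₀ ∈ upSet (pdom T₀) ↔ i₁ ∈ upSet (pdom T₁)) ∧
     (i₀ ∈ upSet (pdom T₀) → extendFun T₀ i₀ = extendFun T₁ i₁))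

/-- A well-formed state: each variable stores a finite partial map containing `[]`
in its domain. -/
def WFState {Var V : Type*} (σ : Var → Index → Option V) : Prop :=
  ∀ y, (pdom (σ y)).Finite ∧ emptyIdx ∈ pdom (σ y)

/-- The relation `State(R)` on states. -/
def StateRel {Var V : Type*} (R : Index → Index → Prop)
    (σ₀ σ₁ : Var → Index → Option V) : Prop :=
  ∀ x, TensorDagRel R (σ₀ x) (σ₁ x)

/-- The state update `σ[x : T]`. -/
noncomputable def updState {Var V : Type*} [DecidableEq Var]
    (σ : Var → Index → Option V) (x : Var) (T : Index → Option V) :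
    Var → Index → Option V :=
  fun y => if y = x then updateMap (σ y) T else σ y

/-- An antichain of indices: no two distinct elements are ⊑-comparable. -/
def IsAntichainIdx (A : Set Index) : Prop :=
  ∀ i ∈ A, ∀ j ∈ A, Index.pre i j → i = j

lemma pre_antisymm {i j : Index} (h1 : Index.pre i j) (h2 : Index.pre j i) : i = j :=
  Subtype.ext (h1.sublist.antisymm h2.sublist)

lemma pre_total {i j k : Index} (h1 : Index.pre i k) (h2 : Index.pre j k) :
    Index.pre i j ∨ Index.pre j i := List.prefix_or_prefix_of_prefix h1 h2

lemma greatest_unique {S : Set Index} {m₀ m₁ : Index}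
    (h0 : greatestIn S m₀) (h1 : greatestIn S m₁) : m₀ = m₁ :=
  pre_antisymm (h1.2 _ h0.1) (h0.2 _ h1.1)

lemma exists_greatest {S : Set Index} {i : Index} (hS : S.Finite) (hne : S.Nonempty)
    (hsub : S ⊆ down i) : ∃ m, greatestIn S m := by
  obtain ⟨a, ha, hmax⟩ := Set.Finite.exists_maximalFor (fun j : Index => j.1.length) S hS hne
  refine ⟨a, ha, fun s hs => ?_⟩
  rcases pre_total (hsub hs) (hsub ha) with h | h
  · exact h
  · have hlen := le_antisymm h.length_le (hmax hs h.length_le)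
    have : a = s := Subtype.ext (h.eq_of_length hlen)
    exact this ▸ List.prefix_refl _

theorem stmt5 {V : Type*} (m T : Index → Option V)
    (hmfin : (pdom m).Finite) (h0 : emptyIdx ∈ pdom m)
    (hTfin : (pdom T).Finite) :
    ∀ i : Index,
      (i ∈ upSet (pdom T) → extendFun (updateMap m T) i = extendFun T i) ∧
      (i ∉ upSet (pdom T) → extendFun (updateMap m T) i = extendFun m i) := by
  intro i
  constructor
  · -- case i ∈ upSet (pdom T)
    rintro ⟨l, hl, hli⟩
    -- the greatest element of pdom T ∩ down i
    have hsubT : pdom T ∩ down i ⊆ down i := Set.inter_subset_right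
    have hexT : ∃ g, greatestIn (pdom T ∩ down i) g :=
      exists_greatest (hTfin.subset Set.inter_subset_left) ⟨l, hl, hli⟩ hsubT
    obtain ⟨gT, hgT⟩ := hexT
    have hgTmemT : gT ∈ pdom T := hgT.1.1
    have hgTdown : gT ∈ down i := hgT.1.2
    -- gT is also greatest in pdom (updateMap m T) ∩ down i
    have hgU : greatestIn (pdom (updateMap m T) ∩ down i) gT := by
      constructor
      · refine ⟨?_, hgTdown⟩
        show updateMap m T gT ≠ none
        unfold updateMap
        rw [if_pos hgTmemT]
        exact hgTmemT
      · rintro s ⟨hs, hsd⟩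
        rcases pre_total hsd hgTdown with h | h
        · exact h
        · -- gT ⊑ s, so s ∈ upSet (pdom T), so updateMap forces s ∈ pdom T
          have hsup : s ∈ upSet (pdom T) := ⟨gT, hgTmemT, h⟩
          have hsT : s ∈ pdom T := by
            by_contra hsT
            apply hs
            unfold updateMap
            rw [if_neg hsT, if_pos hsup]
          exact hgT.2 s ⟨hsT, hsd⟩
    have hexU : ∃ g, greatestIn (pdom (updateMap m T) ∩ down i) g := ⟨gT, hgU⟩
    have hexT' : ∃ g, greatestIn (pdom T ∩ down i) g := ⟨gT, hgT⟩
    unfold extendFun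
    rw [dif_pos hexU, dif_pos hexT']
    have e1 : hexU.choose = gT := greatest_unique hexU.choose_spec hgU
    have e2 : hexT'.choose = gT := greatest_unique hexT'.choose_spec hgT
    rw [e1, e2]
    unfold updateMap
    rw [if_pos hgTmemT]
  · -- case i ∉ upSet (pdom T)
    intro hi
    have hagree : ∀ j ∈ down i, updateMap m T j = m j := by
      intro j hj
      have hjT : j ∉ pdom T := fun h => hi ⟨j, h, hj⟩
      have hjup : j ∉ upSet (pdom T) := by
        rintro ⟨l, hl, hlj⟩
        exact hi ⟨l, hl, hlj.trans hj⟩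
      unfold updateMap
      rw [if_neg hjT, if_neg hjup]
    have hset : pdom (updateMap m T) ∩ down i = pdom m ∩ down i := by
      ext j
      constructor
      · rintro ⟨hjm, hjd⟩
        refine ⟨?_, hjd⟩
        show m j ≠ none
        rw [← hagree j hjd]
        exact hjm
      · rintro ⟨hjm, hjd⟩
        refine ⟨?_, hjd⟩
        show updateMap m T j ≠ none
        rw [hagree j hjd]
        exact hjm
    unfold extendFun
    rw [hset]
    split
    · next h =>
      exact hagree h.choose h.choose_spec.1.2
    · rfl
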